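/- Let T > 0, let A : ℝ → ℍ^{n×n} be continuous with A(t+T) = A(t), let M be the principal fundamental matrix of ẋ = A(t)x with M(0) = I, and let μ ∈ ℂ be such that ρ = e^{μT} is a characteristic multiplier (a standard eigenvalue of M(T)). Then there exists a function p : ℝ → ℍ^n, not identically zero, with p(t+T) = p(t) for all t, such that x(t) := p(t)·e^{μt} (right scalar multiplication by the quaternion e^{μt}, viewing ℂ ⊆ ℍ) is a solution of ẋ = A(t)x; moreover x(t+T) = x(t)·ρ for all t. -/

import Mathlib

open Matrix Polynomial
open scoped Quaternion

noncomputable section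

/-- The two complex components of a quaternion: `q = c1 q + (c2 q) * j`,
identifying `ℂ` with the real span of `1` and `i` in `ℍ`. -/
def Quaternion.c1 (q : ℍ[ℝ]) : ℂ := ⟨q.re, q.imI⟩

def Quaternion.c2 (q : ℍ[ℝ]) : ℂ := ⟨q.imJ, q.imK⟩

/-- The embedding of `ℂ` into `ℍ` as the real span of `1` and `i`. -/
def Complex.toQuat (z : ℂ) : ℍ[ℝ] := ⟨z.re, z.im, 0, 0⟩

/-- The complex adjoint matrix `χ_A` of a quaternion matrix `A = A₁ + A₂·j`:
the block matrix `[[A₁, A₂], [-conj A₂, conj A₁]]`. -/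
def chiMat {n : ℕ} (A : Matrix (Fin n) (Fin n) ℍ[ℝ]) :
    Matrix (Fin n ⊕ Fin n) (Fin n ⊕ Fin n) ℂ :=
  Matrix.fromBlocks (A.map Quaternion.c1) (A.map Quaternion.c2)
    ((-(A.map Quaternion.c2)).map (starRingEnd ℂ)) ((A.map Quaternion.c1).map (starRingEnd ℂ))

/-- `ρ` is a standard eigenvalue of the quaternion matrix `A`: an eigenvalue of the
complex adjoint matrix `χ_A` with nonnegative imaginary part. -/
def IsStdEigenvalue {n : ℕ} (A : Matrix (Fin n) (Fin n) ℍ[ℝ]) (ρ : ℂ) : Prop :=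
  (chiMat A).charpoly.IsRoot ρ ∧ 0 ≤ ρ.im

/-- `s` is the multiset of standard eigenvalues of `A` counted with multiplicity:
it has `n` elements, all with nonnegative imaginary part, and the characteristic
polynomial of `χ_A` is `∏_{z ∈ s} (X - z)·(X - conj z)`. -/
def IsStdEigs {n : ℕ} (A : Matrix (Fin n) (Fin n) ℍ[ℝ]) (s : Multiset ℂ) : Prop :=
  Multiset.card s = n ∧ (∀ z ∈ s, 0 ≤ z.im) ∧
    (chiMat A).charpoly =
      (s.map (fun z => (X - C z) * (X - C (starRingEnd ℂ z)))).prod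

/-- `x : ℝ → ℍ^n` is a solution of the linear quaternionic system `ẋ = A(t)x`. -/
def IsSol {n : ℕ} (A : ℝ → Matrix (Fin n) (Fin n) ℍ[ℝ]) (x : ℝ → Fin n → ℍ[ℝ]) : Prop :=
  ∀ t : ℝ, HasDerivAt x ((A t).mulVec (x t)) t

/-- The norm `‖x‖ = Σ_k |x_k|` on `ℍ^n`. -/
def vecNorm {n : ℕ} (x : Fin n → ℍ[ℝ]) : ℝ := ∑ k, ‖x k‖

/-- The norm `‖A‖ = Σ_{i,j} |a_{ij}|` on `ℍ^{n×n}`. -/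
def matNorm {n : ℕ} (A : Matrix (Fin n) (Fin n) ℍ[ℝ]) : ℝ := ∑ i, ∑ j, ‖A i j‖

/-- Stability (in the sense of Lyapunov) of the system `ẋ = A(t)x` at `t₀`. -/
def StableAt {n : ℕ} (A : ℝ → Matrix (Fin n) (Fin n) ℍ[ℝ]) (t₀ : ℝ) : Prop :=
  ∀ ε > (0:ℝ), ∃ δ > (0:ℝ), ∀ x : ℝ → Fin n → ℍ[ℝ], IsSol A x →
    vecNorm (x t₀) < δ → ∀ t ≥ t₀, vecNorm (x t) < ε

/-- Asymptotic stability of the system `ẋ = A(t)x` at `t₀`. -/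
def AsympStableAt {n : ℕ} (A : ℝ → Matrix (Fin n) (Fin n) ℍ[ℝ]) (t₀ : ℝ) : Prop :=
  StableAt A t₀ ∧ ∃ δ > (0:ℝ), ∀ x : ℝ → Fin n → ℍ[ℝ], IsSol A x →
    vecNorm (x t₀) < δ →
      Filter.Tendsto (fun t => vecNorm (x t)) Filter.atTop (nhds 0)

/-- `M` is a fundamental matrix of `ẋ = A(t)x`: entrywise `M'(t) = A(t)·M(t)`
and `M(t)` is invertible for every `t`. -/
def IsFundamental {n : ℕ} (A M : ℝ → Matrix (Fin n) (Fin n) ℍ[ℝ]) : Prop :=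
  (∀ (t : ℝ) (i j : Fin n), HasDerivAt (fun s => M s i j) ((A t * M t) i j) t) ∧
    ∀ t : ℝ, IsUnit (M t)


/-! ### Auxiliary lemmas -/

/-- The quaternion unit `j`. -/
def jq : ℍ[ℝ] := ⟨0, 0, 1, 0⟩

@[simp] lemma toQuat_re' (z : ℂ) : z.toQuat.re = z.re := rfl
@[simp] lemma toQuat_imI' (z : ℂ) : z.toQuat.imI = z.im := rfl
@[simp] lemma toQuat_imJ' (z : ℂ) : z.toQuat.imJ = 0 := rfl
@[simp] lemma toQuat_imK' (z : ℂ) : z.toQuat.imK = 0 := rfl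
@[simp] lemma jq_re' : jq.re = 0 := rfl
@[simp] lemma jq_imI' : jq.imI = 0 := rfl
@[simp] lemma jq_imJ' : jq.imJ = 1 := rfl
@[simp] lemma jq_imK' : jq.imK = 0 := rfl

lemma toQuat_add (a b : ℂ) : (a + b).toQuat = a.toQuat + b.toQuat := by
  ext <;> simp

lemma toQuat_zero : (0 : ℂ).toQuat = 0 := by ext <;> simp [Complex.toQuat]

lemma toQuat_one : (1 : ℂ).toQuat = 1 := by ext <;> simp [Complex.toQuat]

lemma toQuat_mul (a b : ℂ) : (a * b).toQuat = a.toQuat * b.toQuat := by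
  ext <;> simp [Complex.mul_re, Complex.mul_im]

lemma toQuat_sum {ι : Type*} (s : Finset ι) (f : ι → ℂ) :
    (∑ i ∈ s, f i).toQuat = ∑ i ∈ s, (f i).toQuat := by
  induction s using Finset.cons_induction with
  | empty => simp [toQuat_zero]
  | cons i s hi ih => simp [toQuat_add, ih]

lemma key_mul (q : ℍ[ℝ]) (a b : ℂ) :
    q * (a.toQuat + b.toQuat * jq) =
      (q.c1 * a - q.c2 * (starRingEnd ℂ b)).toQuat
        + (q.c1 * b + q.c2 * (starRingEnd ℂ a)).toQuat * jq := by
  ext <;>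
    simp [Quaternion.c1, Quaternion.c2, Complex.mul_re, Complex.mul_im] <;>
    ring

lemma mul_toQuat (a b ρ : ℂ) :
    (a.toQuat + b.toQuat * jq) * ρ.toQuat =
      (a * ρ).toQuat + (b * starRingEnd ℂ ρ).toQuat * jq := by
  ext <;>
    simp [Complex.mul_re, Complex.mul_im] <;> ring

lemma root_exists_eigvec {m : Type*} [Fintype m] [DecidableEq m] (N : Matrix m m ℂ) (ρ : ℂ)
    (h : N.charpoly.IsRoot ρ) :
    ∃ c : m → ℂ, c ≠ 0 ∧ N.mulVec c = fun i => ρ * c i := by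
  have hdet : (Matrix.diagonal (fun _ : m => ρ) - N).det = 0 := by
    have h0 : N.charpoly.eval ρ = 0 := h
    rw [Matrix.charpoly, ← Polynomial.coe_evalRingHom, RingHom.map_det] at h0
    convert h0 using 2
    ext i j
    by_cases hij : i = j <;>
      simp [charmatrix_apply, Matrix.diagonal_apply, hij, Matrix.sub_apply]
  obtain ⟨c, hc0, hc⟩ := Matrix.exists_mulVec_eq_zero_iff.2 hdet
  refine ⟨c, hc0, ?_⟩
  rw [Matrix.sub_mulVec] at hc
  have h2 := sub_eq_zero.1 hc
  funext i
  have h3 := congrFun h2 i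
  rw [← h3, Matrix.mulVec_diagonal]

lemma quat_eigvec {n : ℕ} (Q : Matrix (Fin n) (Fin n) ℍ[ℝ]) (ρ : ℂ)
    (h : (chiMat Q).charpoly.IsRoot ρ) :
    ∃ v : Fin n → ℍ[ℝ], (∃ k, v k ≠ 0) ∧
      Q.mulVec v = fun k => v k * ρ.toQuat := by
  obtain ⟨c, hc0, hc⟩ := root_exists_eigvec (chiMat Q) ρ h
  set u : Fin n → ℂ := fun k => c (Sum.inl k) with hu
  set w : Fin n → ℂ := fun k => c (Sum.inr k) with hw
  set b : Fin n → ℂ := fun k => -(starRingEnd ℂ (w k)) with hb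
  set v : Fin n → ℍ[ℝ] := fun k => (u k).toQuat + (b k).toQuat * jq with hv
  have eq1 : ∀ k, (∑ j, (Q k j).c1 * u j) + (∑ j, (Q k j).c2 * w j) = ρ * u k := by
    intro k
    have := congrFun hc (Sum.inl k)
    simpa [Matrix.mulVec, dotProduct, Fintype.sum_sum_type, chiMat,
      Matrix.fromBlocks_apply₁₁, Matrix.fromBlocks_apply₁₂, Matrix.map_apply] using this
  have eq2 : ∀ k, (∑ j, -(starRingEnd ℂ ((Q k j).c2)) * u j)
      + (∑ j, (starRingEnd ℂ ((Q k j).c1)) * w j) = ρ * w k := by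
    intro k
    have := congrFun hc (Sum.inr k)
    simpa [Matrix.mulVec, dotProduct, Fintype.sum_sum_type, chiMat,
      Matrix.fromBlocks_apply₂₁, Matrix.fromBlocks_apply₂₂, Matrix.map_apply] using this
  refine ⟨v, ?_, ?_⟩
  · obtain ⟨i, hi⟩ := Function.ne_iff.1 hc0
    rcases i with k | k
    · refine ⟨k, fun hvk => hi ?_⟩
      have h1 : (v k).re = 0 := by rw [hvk]; rfl
      have h2 : (v k).imI = 0 := by rw [hvk]; rfl
      have hre : (v k).re = (u k).re := by simp [hv]
      have him : (v k).imI = (u k).im := by simp [hv]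
      have : u k = 0 := Complex.ext (by rw [← hre, h1]; simp) (by rw [← him, h2]; simp)
      simpa [hu] using this
    · refine ⟨k, fun hvk => hi ?_⟩
      have h1 : (v k).imJ = 0 := by rw [hvk]; rfl
      have h2 : (v k).imK = 0 := by rw [hvk]; rfl
      have hre : (v k).imJ = (b k).re := by simp [hv]
      have him : (v k).imK = (b k).im := by simp [hv]
      have hbk : b k = 0 := Complex.ext (by rw [← hre, h1]; simp) (by rw [← him, h2]; simp)
      have : w k = 0 := by
        have := congrArg (starRingEnd ℂ) (neg_eq_zero.1 hbk)
        simpa using this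
      simpa [hw] using this
  · funext k
    have expand : Q.mulVec v k =
        (∑ j, ((Q k j).c1 * u j - (Q k j).c2 * (starRingEnd ℂ (b j)))).toQuat
          + (∑ j, ((Q k j).c1 * b j + (Q k j).c2 * (starRingEnd ℂ (u j)))).toQuat * jq := by
      rw [toQuat_sum, toQuat_sum, Finset.sum_mul, ← Finset.sum_add_distrib]
      simp only [Matrix.mulVec, dotProduct]
      exact Finset.sum_congr rfl fun j _ => key_mul (Q k j) (u j) (b j)
    rw [expand, mul_toQuat]
    congr 1
    · congr 1
      have : ∀ j, (Q k j).c1 * u j - (Q k j).c2 * (starRingEnd ℂ (b j))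
          = (Q k j).c1 * u j + (Q k j).c2 * w j := by
        intro j; simp [hb]
      rw [Finset.sum_congr rfl fun j _ => this j, Finset.sum_add_distrib, eq1 k]
      ring
    · congr 2
      have eq2' := congrArg (starRingEnd ℂ) (eq2 k)
      simp only [map_add, map_sum, _root_.map_mul, map_neg, Complex.conj_conj, neg_mul,
        Finset.sum_neg_distrib] at eq2'
      have : ∀ j, (Q k j).c1 * b j + (Q k j).c2 * (starRingEnd ℂ (u j))
          = -((Q k j).c1 * (starRingEnd ℂ (w j))) + (Q k j).c2 * (starRingEnd ℂ (u j)) := by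
        intro j; simp [hb]
      rw [Finset.sum_congr rfl fun j _ => this j, Finset.sum_add_distrib]
      simp only [Finset.sum_neg_distrib]
      linear_combination -eq2'

lemma lipschitz_mulVec {n : ℕ} (C : NNReal) (A : Matrix (Fin n) (Fin n) ℍ[ℝ])
    (hC : ∀ k, ∑ j, ‖A k j‖ ≤ (C : ℝ)) :
    LipschitzWith C (fun x : Fin n → ℍ[ℝ] => A.mulVec x) := by
  apply LipschitzWith.of_dist_le_mul
  intro x y
  rw [dist_eq_norm, dist_eq_norm, ← Matrix.mulVec_sub]
  set u := x - y
  rcases Nat.eq_zero_or_pos n with hn | hn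
  · subst hn
    simp [Subsingleton.elim (A.mulVec u) 0]
    positivity
  apply pi_norm_le_iff_of_nonneg (by positivity) |>.2
  intro k
  calc ‖A.mulVec u k‖ = ‖∑ j, A k j * u j‖ := by simp [Matrix.mulVec, dotProduct]
    _ ≤ ∑ j, ‖A k j * u j‖ := norm_sum_le _ _
    _ = ∑ j, ‖A k j‖ * ‖u j‖ := by simp [norm_mul]
    _ ≤ ∑ j, ‖A k j‖ * ‖u‖ := by
        refine Finset.sum_le_sum fun j _ => ?_
        exact mul_le_mul_of_nonneg_left (norm_le_pi_norm u j) (norm_nonneg _)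
    _ = (∑ j, ‖A k j‖) * ‖u‖ := by rw [Finset.sum_mul]
    _ ≤ (C : ℝ) * ‖u‖ := mul_le_mul_of_nonneg_right (hC k) (norm_nonneg _)

lemma sol_unique {n : ℕ} {A : ℝ → Matrix (Fin n) (Fin n) ℍ[ℝ]} (C : NNReal)
    (hC : ∀ t k, ∑ j, ‖A t k j‖ ≤ (C : ℝ)) {x y : ℝ → Fin n → ℍ[ℝ]}
    (hx : IsSol A x) (hy : IsSol A y) (h0 : x 0 = y 0) : x = y := by
  funext t
  have hv : ∀ s : ℝ, LipschitzOnWith C (fun z : Fin n → ℍ[ℝ] => (A s).mulVec z) Set.univ :=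
    fun s => (lipschitz_mulVec C (A s) (hC s)).lipschitzOnWith
  have ht : t ∈ Set.Ioo (-(|t| + 1)) (|t| + 1) := by
    constructor
    · nlinarith [neg_abs_le t, abs_nonneg t]
    · nlinarith [le_abs_self t, abs_nonneg t]
  have h0' : (0:ℝ) ∈ Set.Ioo (-(|t| + 1)) (|t| + 1) := by
    constructor <;> nlinarith [abs_nonneg t]
  exact ODE_solution_unique_of_mem_Ioo (fun s _ => hv s) h0'
    (fun s _ => ⟨hx s, Set.mem_univ _⟩) (fun s _ => ⟨hy s, Set.mem_univ _⟩) h0 ht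

/-- if `ρ = e^{μT}` is a characteristic multiplier, there is a nontrivial
`T`-periodic `p` with `x(t) = p(t)·e^{μt}` a solution and `x(t+T) = x(t)·ρ`. -/
theorem stmt16 {n : ℕ} (T : ℝ) (hT : 0 < T) (A M : ℝ → Matrix (Fin n) (Fin n) ℍ[ℝ])
    (hA : Continuous A) (hAper : ∀ t, A (t + T) = A t) (hM : IsFundamental A M)
    (hM0 : M 0 = 1) (μ ρ : ℂ) (hρ : ρ = Complex.exp (μ * (T : ℂ)))
    (hmult : IsStdEigenvalue (M T) ρ) :
    ∃ p : ℝ → Fin n → ℍ[ℝ], p ≠ 0 ∧ (∀ t, p (t + T) = p t) ∧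
      IsSol A (fun t k => p t k * Complex.toQuat (Complex.exp (μ * (t : ℂ)))) ∧
      ∀ (t : ℝ) (k : Fin n),
        p (t + T) k * Complex.toQuat (Complex.exp (μ * ((t + T : ℝ) : ℂ))) =
          p t k * Complex.toQuat (Complex.exp (μ * (t : ℂ))) * Complex.toQuat ρ := by
    classical
  -- a global bound on the matrix `A`
  set g : ℝ → ℝ := fun t => ∑ i, ∑ j, ‖A t i j‖ with hg
  have hgc : Continuous g := by
    refine continuous_finset_sum _ fun i _ => continuous_finset_sum _ fun j _ => ?_
    exact ((continuous_apply j).comp ((continuous_apply i).comp hA)).norm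
  have hgper : Function.Periodic g T := fun t => by simp [hg, hAper]
  obtain ⟨s0, hs0, hmax⟩ := isCompact_Icc.exists_isMaxOn (Set.nonempty_Icc.2 hT.le)
    hgc.continuousOn (f := g)
  set C : NNReal := ⟨max (g s0) 0, le_max_right _ _⟩ with hCdef
  have hC : ∀ t k, ∑ j, ‖A t k j‖ ≤ (C : ℝ) := by
    intro t k
    obtain ⟨y, hy, hgy⟩ := hgper.exists_mem_Ico₀ hT t
    have h1 : ∑ j, ‖A t k j‖ ≤ g t :=
      Finset.single_le_sum (f := fun i => ∑ j, ‖A t i j‖)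
        (fun i _ => Finset.sum_nonneg fun j _ => norm_nonneg _) (Finset.mem_univ k)
    have h2 : g t ≤ g s0 := by
      rw [hgy]; exact hmax (Set.Ico_subset_Icc_self hy)
    have h3 : g s0 ≤ (C : ℝ) := le_max_left _ _
    linarith
  -- the eigenvector
  obtain ⟨v, ⟨k0, hk0⟩, hveig⟩ := quat_eigvec (M T) ρ hmult.1
  -- the solution x t = M t *ᵥ v
  set x : ℝ → Fin n → ℍ[ℝ] := fun t => (M t).mulVec v with hxdef
  have hx0 : x 0 = v := by rw [hxdef]; simp [hM0, Matrix.one_mulVec]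
  have hxsol : IsSol A x := by
    intro t
    rw [hasDerivAt_pi]
    intro k
    have h1 : HasDerivAt (fun s => ∑ j, M s k j * v j) (∑ j, (A t * M t) k j * v j) t :=
      HasDerivAt.fun_sum fun j _ => (hM.1 t k j).mul_const (v j)
    have h2 : (fun s => ∑ j, M s k j * v j) = fun s => x s k := by
      funext s; simp [hxdef, Matrix.mulVec, dotProduct]
    rw [h2] at h1
    convert h1 using 1
    case e'_4 => rfl
    case e'_5 => rfl
    show (A t).mulVec (x t) k = _
    rw [hxdef]
    show ((A t) *ᵥ ((M t) *ᵥ v)) k = _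
    rw [Matrix.mulVec_mulVec]
    simp [Matrix.mulVec, dotProduct]
  -- the Floquet shift identity x (t + T) = x t * ρ
  have hyT : IsSol A (fun t => x (t + T)) := by
    intro t
    have h1 := HasDerivAt.scomp (𝕜 := ℝ) t (hxsol (t + T)) ((hasDerivAt_id t).add_const T)
    simp only [one_smul] at h1
    have h2 : A (t + T) = A t := hAper t
    simp [h2] at h1
    exact h1
  have hzT : IsSol A (fun t k => x t k * ρ.toQuat) := by
    intro t
    rw [hasDerivAt_pi]
    intro k
    have h1 := (hasDerivAt_pi.1 (hxsol t) k).mul_const ρ.toQuat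
    convert h1 using 1
    case e'_4 => rfl
    show (A t).mulVec (fun k => x t k * ρ.toQuat) k = (A t).mulVec (x t) k * ρ.toQuat
    simp only [Matrix.mulVec, dotProduct, Finset.sum_mul]
    exact Finset.sum_congr rfl fun j _ => (mul_assoc _ _ _).symm
  have h00 : (fun t => x (t + T)) 0 = (fun t k => x t k * ρ.toQuat) 0 := by
    simp only [zero_add]
    funext k
    have : x T k = v k * ρ.toQuat := congrFun hveig k
    rw [this, congrFun hx0 k]
  have hshift : ∀ t, x (t + T) = fun k => x t k * ρ.toQuat := by
    intro t
    exact congrFun (sol_unique C hC hyT hzT h00) t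
  -- define p
  set p : ℝ → Fin n → ℍ[ℝ] :=
    fun t k => x t k * (Complex.exp (-(μ * (t : ℂ)))).toQuat with hpdef
  have hpx : ∀ (t : ℝ) (k : Fin n),
      p t k * (Complex.exp (μ * (t : ℂ))).toQuat = x t k := by
    intro t k
    rw [hpdef]
    rw [mul_assoc, ← toQuat_mul, ← Complex.exp_add, neg_add_cancel, Complex.exp_zero,
      toQuat_one, mul_one]
  refine ⟨p, ?_, ?_, ?_, ?_⟩
  · intro hp0
    apply hk0
    have h1 : p 0 k0 = 0 := by rw [hp0]; rfl
    have h2 := hpx 0 k0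
    rw [h1, zero_mul] at h2
    rw [← congrFun hx0 k0, ← h2]
  · intro t
    funext k
    have h1 : p (t + T) k = x t k * ρ.toQuat
        * (Complex.exp (-(μ * ((t + T : ℝ) : ℂ)))).toQuat := by
      show x (t + T) k * _ = _
      rw [congrFun (hshift t) k]
    rw [h1, hpdef, mul_assoc, ← toQuat_mul]
    congr 2
    rw [hρ, ← Complex.exp_add]
    congr 1
    push_cast
    ring
  · have hfun : (fun t k => p t k * Complex.toQuat (Complex.exp (μ * (t : ℂ)))) = x :=
      funext fun t => funext fun k => hpx t k
    rw [hfun]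
    exact hxsol
  · intro t k
    rw [hpx (t + T) k, hpx t k, congrFun (hshift t) k]
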